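/- Let S be an evolution system on ℓ²(ℤ; ℂ^d), let τ > 0, let T be the left shift on ℓ²(ℤ; ℂ^d), and assume S(t + τ, s + τ) = T^{−1} S(t, s) T for all real t, s, and sup_{(t,s) ∈ [0,τ]²} ‖S(t,s)‖ < ∞. Then sup_{t ≥ 0} ‖S(t, 0)‖ < ∞ if and only if sup_{m ∈ ℕ} ‖(T S(τ, 0))^m‖ < ∞; in particular ‖S(mτ, 0)‖ = ‖(T S(τ, 0))^m‖ for every m ∈ ℕ. -/
import Mathlib

open scoped ENNReal


/-- The space `ℓ²(ℤ; ℂ^d)`. -/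
noncomputable abbrev L2Z (d : ℕ) := lp (fun _ : ℤ => EuclideanSpace ℂ (Fin d)) 2

open ContinuousLinearMap in
private lemma norm_isoL {X : Type*} [NormedAddCommGroup X] [NormedSpace ℂ X]
    (g B : X →L[ℂ] X) (hg : ∀ x, ‖g x‖ = ‖x‖) : ‖g.comp B‖ = ‖B‖ := by
  refine le_antisymm ?_ ?_
  · refine opNorm_le_bound _ (norm_nonneg B) fun x => ?_
    simpa [hg] using B.le_opNorm x
  · refine opNorm_le_bound _ (norm_nonneg _) fun x => ?_
    calc ‖B x‖ = ‖g (B x)‖ := (hg _).symm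
    _ ≤ ‖g.comp B‖ * ‖x‖ := (g.comp B).le_opNorm x

open ContinuousLinearMap in
private lemma norm_isoR {X : Type*} [NormedAddCommGroup X] [NormedSpace ℂ X]
    (g h B : X →L[ℂ] X) (hg : ∀ x, ‖g x‖ = ‖x‖)
    (hh : ∀ x, ‖h x‖ = ‖x‖) (hgh : ∀ x, g (h x) = x) : ‖B.comp g‖ = ‖B‖ := by
  refine le_antisymm ?_ ?_
  · refine opNorm_le_bound _ (norm_nonneg B) fun x => ?_
    calc ‖B (g x)‖ ≤ ‖B‖ * ‖g x‖ := B.le_opNorm _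
    _ = ‖B‖ * ‖x‖ := by rw [hg]
  · refine opNorm_le_bound _ (norm_nonneg _) fun x => ?_
    calc ‖B x‖ = ‖(B.comp g) (h x)‖ := by simp [hgh]
    _ ≤ ‖B.comp g‖ * ‖h x‖ := (B.comp g).le_opNorm _
    _ = ‖B.comp g‖ * ‖x‖ := by rw [hh]

private lemma shift_iso (d : ℕ) (T : L2Z d ≃L[ℂ] L2Z d)
    (hT : ∀ (f : L2Z d) (j : ℤ),
      (T f : ∀ _ : ℤ, EuclideanSpace ℂ (Fin d)) j = f (j + 1)) (f : L2Z d) :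
    ‖T f‖ = ‖f‖ := by
  have h2 : (0:ℝ) < (2 : ℝ≥0∞).toReal := by norm_num
  have h1 := lp.norm_rpow_eq_tsum h2 (T f)
  have h1' := lp.norm_rpow_eq_tsum h2 f
  have he : ∑' j : ℤ, ‖(T f : ∀ _ : ℤ, EuclideanSpace ℂ (Fin d)) j‖ ^ (2:ℝ≥0∞).toReal
      = ∑' j : ℤ, ‖f j‖ ^ (2:ℝ≥0∞).toReal := by
    rw [← (Equiv.addRight (1:ℤ)).tsum_eq (fun j => ‖f j‖ ^ (2:ℝ≥0∞).toReal)]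
    exact tsum_congr fun j => by rw [hT]; rfl
  have hpow : ‖T f‖ ^ (2:ℝ≥0∞).toReal = ‖f‖ ^ (2:ℝ≥0∞).toReal := by
    rw [h1, h1', he]
  have h2t : (2:ℝ≥0∞).toReal = (2:ℝ) := by simp
  rw [h2t, Real.rpow_two, Real.rpow_two] at hpow
  nlinarith [norm_nonneg (T f), norm_nonneg f]



set_option maxHeartbeats 1000000 in
/-- If an evolution system `S` on `ℓ²(ℤ; ℂ^d)` satisfies
`S(t+τ, s+τ) = T⁻¹ S(t,s) T` for the left shift `T` and is bounded on `[0,τ]²`, then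
`sup_{t ≥ 0} ‖S(t,0)‖ < ∞ ↔ sup_m ‖(T S(τ,0))^m‖ < ∞`; in particular
`‖S(mτ,0)‖ = ‖(T S(τ,0))^m‖` for every `m ∈ ℕ`. -/
theorem evolution_shifted_monodromy_bounded_iff (d : ℕ) (τ : ℝ) (hτ : 0 < τ)
    (T : L2Z d ≃L[ℂ] L2Z d)
    (hT : ∀ (f : L2Z d) (j : ℤ),
      (T f : ∀ _ : ℤ, EuclideanSpace ℂ (Fin d)) j = f (j + 1))
    (S : ℝ → ℝ → (L2Z d →L[ℂ] L2Z d))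
    (hid : ∀ s : ℝ, S s s = 1)
    (hcomp : ∀ s r t : ℝ, S t s = (S t r).comp (S r s))
    (hshift : ∀ t s : ℝ, S (t + τ) (s + τ)
      = ((T.symm : L2Z d →L[ℂ] L2Z d).comp ((S t s).comp (T : L2Z d →L[ℂ] L2Z d))))
    (hbdd : ∃ C : ℝ, ∀ t ∈ Set.Icc (0:ℝ) τ, ∀ s ∈ Set.Icc (0:ℝ) τ, ‖S t s‖ ≤ C) :
    ((∃ C : ℝ, ∀ t : ℝ, 0 ≤ t → ‖S t 0‖ ≤ C) ↔
      (∃ C : ℝ, ∀ m : ℕ, ‖((T : L2Z d →L[ℂ] L2Z d).comp (S τ 0)) ^ m‖ ≤ C)) ∧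
    (∀ m : ℕ, ‖S ((m : ℝ) * τ) 0‖ = ‖((T : L2Z d →L[ℂ] L2Z d).comp (S τ 0)) ^ m‖) := by
  set U : L2Z d →L[ℂ] L2Z d := (T : L2Z d →L[ℂ] L2Z d) with hU
  set V : L2Z d →L[ℂ] L2Z d := (T.symm : L2Z d →L[ℂ] L2Z d) with hV
  set A : L2Z d →L[ℂ] L2Z d := U.comp (S τ 0) with hA
  -- basic isometry facts
  have hUiso : ∀ x, ‖U x‖ = ‖x‖ := fun x => shift_iso d T hT x
  have hViso : ∀ x, ‖V x‖ = ‖x‖ := fun x => by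
    have h := hUiso (V x)
    simpa [hU, hV] using h.symm
  have hUV1 : U * V = 1 := ContinuousLinearMap.ext fun x => by simp [hU, hV]
  have hVU1 : V * U = 1 := ContinuousLinearMap.ext fun x => by simp [hU, hV]
  -- powers
  have hUmiso : ∀ m : ℕ, ∀ x, ‖(U ^ m) x‖ = ‖x‖ := by
    intro m
    induction m with
    | zero => intro x; rw [pow_zero, ContinuousLinearMap.one_apply]
    | succ n ih => intro x; rw [pow_succ, ContinuousLinearMap.mul_apply, ih, hUiso]
  have hVmiso : ∀ m : ℕ, ∀ x, ‖(V ^ m) x‖ = ‖x‖ := by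
    intro m
    induction m with
    | zero => intro x; rw [pow_zero, ContinuousLinearMap.one_apply]
    | succ n ih => intro x; rw [pow_succ, ContinuousLinearMap.mul_apply, ih, hViso]
  have hUVm : ∀ m : ℕ, (U ^ m) * (V ^ m) = 1 := by
    intro m
    induction m with
    | zero => simp
    | succ n ih =>
      rw [pow_succ U, pow_succ' V]
      calc U ^ n * U * (V * V ^ n) = U ^ n * ((U * V) * V ^ n) := by simp only [mul_assoc]
        _ = U ^ n * V ^ n := by rw [hUV1, one_mul]
        _ = 1 := ih
  -- iterated shift
  have hshiftm : ∀ m : ℕ, ∀ t s : ℝ,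
      S (t + m * τ) (s + m * τ) = (V ^ m) * ((S t s) * (U ^ m)) := by
    intro m
    induction m with
    | zero => intro t s; simp
    | succ n ih =>
      intro t s
      have h1 : t + (n + 1 : ℕ) * τ = (t + τ) + n * τ := by push_cast; ring
      have h2 : s + (n + 1 : ℕ) * τ = (s + τ) + n * τ := by push_cast; ring
      rw [h1, h2, ih (t + τ) (s + τ), hshift t s]
      show (V ^ n) * ((V * (S t s * U)) * U ^ n) = V ^ (n+1) * (S t s * U ^ (n+1))
      rw [pow_succ V, pow_succ' U]
      simp only [mul_assoc]
  -- key identity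
  have hkey : ∀ m : ℕ, S ((m : ℝ) * τ) 0 = (V ^ m) * (A ^ m) := by
    intro m
    induction m with
    | zero => simp [hid]
    | succ n ih =>
      have hc : S (((n+1 : ℕ) : ℝ) * τ) 0
          = (S (((n+1 : ℕ) : ℝ) * τ) ((n : ℝ) * τ)).comp (S ((n : ℝ) * τ) 0) :=
        hcomp 0 ((n : ℝ) * τ) _
      have hs : S (((n+1 : ℕ) : ℝ) * τ) ((n : ℝ) * τ) = (V ^ n) * ((S τ 0) * (U ^ n)) := by
        have h1 : ((n+1 : ℕ) : ℝ) * τ = τ + (n : ℝ) * τ := by push_cast; ring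
        have h2 : (n : ℝ) * τ = 0 + (n : ℝ) * τ := by ring
        rw [h1]; nth_rewrite 2 [h2]; exact hshiftm n τ 0
      have hVA : V * A = S τ 0 := by
        show V * (U * S τ 0) = S τ 0
        rw [← mul_assoc, hVU1, one_mul]
      rw [hc, ih]
      show S (((n+1:ℕ):ℝ) * τ) ((n : ℝ) * τ) * ((V ^ n) * (A ^ n)) = V ^ (n+1) * A ^ (n+1)
      rw [hs, pow_succ V, pow_succ' A]
      calc V ^ n * (S τ 0 * U ^ n) * (V ^ n * A ^ n)
          = V ^ n * (S τ 0 * ((U ^ n * V ^ n) * A ^ n)) := by simp only [mul_assoc]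
        _ = V ^ n * (S τ 0 * A ^ n) := by rw [hUVm n, one_mul]
        _ = V ^ n * ((V * A) * A ^ n) := by rw [hVA]
        _ = V ^ n * V * (A * A ^ n) := by simp only [mul_assoc]
  -- norm identity
  have hnorm : ∀ m : ℕ, ‖S ((m : ℝ) * τ) 0‖ = ‖A ^ m‖ := by
    intro m
    rw [hkey m]
    exact norm_isoL (V ^ m) (A ^ m) (hVmiso m)
  refine ⟨⟨fun ⟨C, hC⟩ => ⟨C, fun m => ?_⟩, fun ⟨C, hC⟩ => ?_⟩, hnorm⟩
  · rw [← hnorm m]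
    exact hC _ (by positivity)
  · obtain ⟨C₀, hC₀⟩ := hbdd
    have hC₀0 : 0 ≤ C₀ := le_trans (norm_nonneg (S 0 0))
      (hC₀ 0 ⟨le_refl _, hτ.le⟩ 0 ⟨le_refl _, hτ.le⟩)
    refine ⟨C₀ * C, fun t ht => ?_⟩
    set m : ℕ := ⌊t / τ⌋₊ with hm
    have hmle : (m : ℝ) * τ ≤ t := by
      have h := Nat.floor_le (div_nonneg ht hτ.le)
      calc (m : ℝ) * τ ≤ (t / τ) * τ := by nlinarith
        _ = t := div_mul_cancel₀ t hτ.ne'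
    have hlt : t < ((m : ℝ) + 1) * τ := by
      have h := Nat.lt_floor_add_one (t / τ)
      calc t = (t / τ) * τ := (div_mul_cancel₀ t hτ.ne').symm
        _ < ((m : ℝ) + 1) * τ := by nlinarith
    set r : ℝ := t - m * τ with hr
    have hr0 : 0 ≤ r := by simp [hr]; linarith
    have hrτ : r ≤ τ := by simp [hr]; nlinarith
    have hc : S t 0 = (S t ((m : ℝ) * τ)).comp (S ((m : ℝ) * τ) 0) := hcomp 0 _ t
    have hs : S t ((m : ℝ) * τ) = (V ^ m) * ((S r 0) * (U ^ m)) := by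
      have h1 : t = r + (m : ℝ) * τ := by simp [hr]
      have h2 : (m : ℝ) * τ = 0 + (m : ℝ) * τ := by ring
      rw [h1]; nth_rewrite 2 [h2]; exact hshiftm m r 0
    have hnr : ‖S t ((m : ℝ) * τ)‖ = ‖S r 0‖ := by
      rw [hs]
      have h1 : ‖(V ^ m) * ((S r 0) * (U ^ m))‖ = ‖(S r 0) * (U ^ m)‖ :=
        norm_isoL (V ^ m) _ (hVmiso m)
      have h2 : ‖(S r 0).comp (U ^ m)‖ = ‖S r 0‖ := by
        refine norm_isoR (U ^ m) (V ^ m) (S r 0) (hUmiso m) (hVmiso m) fun x => ?_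
        have := ContinuousLinearMap.ext_iff.mp (hUVm m) x
        simpa using this
      rw [h1]; exact h2
    calc ‖S t 0‖ ≤ ‖S t ((m : ℝ) * τ)‖ * ‖S ((m : ℝ) * τ) 0‖ := by
          rw [hc]; exact ContinuousLinearMap.opNorm_comp_le _ _
      _ ≤ C₀ * C := by
          have hb1 : ‖S t ((m : ℝ) * τ)‖ ≤ C₀ := by
            rw [hnr]; exact hC₀ r ⟨hr0, hrτ⟩ 0 ⟨le_refl _, hτ.le⟩
          have hb2 : ‖S ((m : ℝ) * τ) 0‖ ≤ C := by rw [hnorm m]; exact hC m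
          exact mul_le_mul hb1 hb2 (norm_nonneg _) hC₀0
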